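/- Let q ≥ 2 be an integer, n ≥ 1, and φ ∈ ℝ. Then φ·(φ+n)^{{n}−1} = Σ_{m=0}^n C_q(n,m)·φ^{{m}}·m·n^{{n−m}−1}, where (φ+n)^{{n}−1} is a natural number power (since {n} ≥ 1) and n^{{n−m}−1} denotes the integer power (zpow) of the positive real number n with exponent {n−m}−1, which equals −1 exactly when m = n. -/

import Mathlib

open Finset

/-- Base-`q` digit sum `{n} = Σ_t n_t`, where `n_t = n / q^t % q`. -/
def digitSum (q n : ℕ) : ℕ := ∑ t ∈ Finset.range (n + 1), n / q ^ t % q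

/-- Fractal binomial coefficient `C_q(n,m) = Π_t binom(n_t, m_t)`. -/
def Cq (q n m : ℕ) : ℕ :=
  ∏ t ∈ Finset.range (n + m + 1), Nat.choose (n / q ^ t % q) (m / q ^ t % q)

lemma lt_pow' {q : ℕ} (hq : 2 ≤ q) (n : ℕ) : n < q ^ (n + 1) :=
  lt_of_lt_of_le (Nat.lt_two_pow_self (n := n)) (le_trans (Nat.pow_le_pow_right (by norm_num) n.le_succ)
    (Nat.pow_le_pow_left hq _))

lemma div_pow_eq_zero {q n t N : ℕ} (hq : 2 ≤ q) (hn : n < q ^ N) (ht : N ≤ t) :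
    n / q ^ t = 0 :=
  Nat.div_eq_of_lt (lt_of_lt_of_le hn (Nat.pow_le_pow_right (by omega) ht))

lemma dsum_stable {q n N M : ℕ} (hq : 2 ≤ q) (hn : n < q ^ N) (h : N ≤ M) :
    ∑ t ∈ Finset.range M, n / q ^ t % q = ∑ t ∈ Finset.range N, n / q ^ t % q := by
  refine (Finset.sum_subset (Finset.range_subset_range.2 h) ?_).symm
  intro t ht hts
  simp only [Finset.mem_range, not_lt] at ht hts
  rw [div_pow_eq_zero hq hn hts, Nat.zero_mod]

lemma digitSum_eq {q n N : ℕ} (hq : 2 ≤ q) (hn : n < q ^ N) :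
    digitSum q n = ∑ t ∈ Finset.range N, n / q ^ t % q := by
  rw [digitSum, ← dsum_stable hq (lt_pow' hq n) (le_max_left (n+1) N),
    dsum_stable hq hn (le_max_right (n+1) N)]

lemma cprod_stable {q n m N M : ℕ} (hq : 2 ≤ q) (hn : n < q ^ N) (hm : m < q ^ N) (h : N ≤ M) :
    ∏ t ∈ Finset.range M, Nat.choose (n / q ^ t % q) (m / q ^ t % q)
      = ∏ t ∈ Finset.range N, Nat.choose (n / q ^ t % q) (m / q ^ t % q) := by
  refine (Finset.prod_subset (Finset.range_subset_range.2 h) ?_).symm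
  intro t ht hts
  simp only [Finset.mem_range, not_lt] at ht hts
  rw [div_pow_eq_zero hq hn hts, div_pow_eq_zero hq hm hts]
  simp

lemma Cq_eq {q n m N : ℕ} (hq : 2 ≤ q) (hn : n < q ^ N) (hm : m < q ^ N) :
    Cq q n m = ∏ t ∈ Finset.range N, Nat.choose (n / q ^ t % q) (m / q ^ t % q) := by
  have hn' : n < q ^ (n + m + 1) :=
    lt_of_lt_of_le (lt_pow' hq n) (Nat.pow_le_pow_right (by omega) (by omega))
  have hm' : m < q ^ (n + m + 1) :=
    lt_of_lt_of_le (lt_pow' hq m) (Nat.pow_le_pow_right (by omega) (by omega))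
  rw [Cq, ← cprod_stable hq hn' hm' (le_max_left (n+m+1) N),
    cprod_stable hq hn hm (le_max_right (n+m+1) N)]

lemma div_succ_digit {q a b t : ℕ} (hq : 2 ≤ q) (hb : b < q) :
    (q * a + b) / q ^ (t + 1) = a / q ^ t := by
  rw [pow_succ', ← Nat.div_div_eq_div_mul, Nat.mul_add_div (by omega), Nat.div_eq_of_lt hb,
    Nat.add_zero]

lemma mod_digit0 {q a b : ℕ} (hb : b < q) : (q * a + b) % q = b := by
  simp [Nat.add_mul_mod_self_left, Nat.mod_eq_of_lt hb, Nat.mul_add_mod]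

lemma digitSum_rec {q a b : ℕ} (hq : 2 ≤ q) (hb : b < q) :
    digitSum q (q * a + b) = b + digitSum q a := by
  have ha : a < q ^ (a + 1) := lt_pow' hq a
  have h2 : q * a + b < q ^ (a + 1 + 1) := by
    calc q * a + b < q * (a + 1) := by rw [Nat.mul_succ]; omega
    _ ≤ q * q ^ (a + 1) := Nat.mul_le_mul_left q ha
    _ = q ^ (a + 2) := by ring
  rw [digitSum_eq hq h2, Finset.sum_range_succ', digitSum_eq hq ha]
  simp only [pow_zero, Nat.div_one, mod_digit0 hb]
  rw [Nat.add_comm]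
  congr 1
  exact Finset.sum_congr rfl fun t _ => by rw [div_succ_digit hq hb]

lemma Cq_rec {q a b c d : ℕ} (hq : 2 ≤ q) (hb : b < q) (hd : d < q) :
    Cq q (q * a + b) (q * c + d) = Nat.choose b d * Cq q a c := by
  set N := max a c + 1 with hN
  have ha : a < q ^ N := lt_of_lt_of_le (lt_pow' hq a)
    (Nat.pow_le_pow_right (by omega) (by omega))
  have hc : c < q ^ N := lt_of_lt_of_le (lt_pow' hq c)
    (Nat.pow_le_pow_right (by omega) (by omega))
  have h1 : q * a + b < q ^ (N + 1) := by
    calc q * a + b < q * (a + 1) := by rw [Nat.mul_succ]; omega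
    _ ≤ q * q ^ N := Nat.mul_le_mul_left q (by omega)
    _ = q ^ (N + 1) := by ring
  have h2 : q * c + d < q ^ (N + 1) := by
    calc q * c + d < q * (c + 1) := by rw [Nat.mul_succ]; omega
    _ ≤ q * q ^ N := Nat.mul_le_mul_left q (by omega)
    _ = q ^ (N + 1) := by ring
  rw [Cq_eq hq h1 h2, Finset.prod_range_succ', Cq_eq hq ha hc]
  simp only [pow_zero, Nat.div_one, mod_digit0 hb, mod_digit0 hd]
  rw [Nat.mul_comm]
  congr 1
  exact Finset.prod_congr rfl fun t _ => by rw [div_succ_digit hq hb, div_succ_digit hq hd]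


lemma Cq_zero {q : ℕ} (hq : 2 ≤ q) : Cq q 0 0 = 1 := by simp [Cq]

lemma digitSum_zero {q : ℕ} (hq : 2 ≤ q) : digitSum q 0 = 0 := by simp [digitSum]

lemma Cq_ne_zero_le {q : ℕ} (hq : 2 ≤ q) : ∀ m n, Cq q n m ≠ 0 → m ≤ n := by
  intro m
  induction m using Nat.strong_induction_on with
  | _ m ih =>
    intro n h
    have hn := Nat.div_add_mod n q
    have hm := Nat.div_add_mod m q
    rw [← hn, ← hm, Cq_rec hq (Nat.mod_lt _ (by omega)) (Nat.mod_lt _ (by omega))] at h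
    have h1 : m % q ≤ n % q := by
      by_contra hc
      rw [Nat.choose_eq_zero_of_lt (by omega)] at h
      simp at h
    rcases Nat.eq_zero_or_pos m with rfl | hm1
    · exact Nat.zero_le n
    have h2 : m / q ≤ n / q := by
      refine ih (m / q) (Nat.div_lt_self hm1 (by omega)) (n / q) ?_
      intro hz
      rw [hz] at h
      simp at h
    calc m = q * (m / q) + m % q := hm.symm
      _ ≤ q * (n / q) + n % q := by
          have := Nat.mul_le_mul_left q h2
          omega
      _ = n := hn

lemma digitSum_pos {q : ℕ} (hq : 2 ≤ q) : ∀ n, 1 ≤ n → 1 ≤ digitSum q n := by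
  intro n
  induction n using Nat.strong_induction_on with
  | _ n ih =>
    intro hn
    have h := Nat.div_add_mod n q
    rw [← h, digitSum_rec hq (Nat.mod_lt _ (by omega))]
    rcases Nat.eq_zero_or_pos (n % q) with h0 | h1
    · have hd : 1 ≤ n / q := by
        rcases Nat.eq_zero_or_pos (n / q) with h2 | h2
        · rw [h2, Nat.mul_zero] at h; omega
        · exact h2
      have := ih (n / q) (Nat.div_lt_self hn (by omega)) hd
      omega
    · omega

lemma sum_range_mul {q : ℕ} (f : ℕ → ℝ) : ∀ k,
    ∑ m ∈ Finset.range (q * k), f m = ∑ c ∈ Finset.range k, ∑ d ∈ Finset.range q, f (q * c + d) := by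
  intro k
  induction k with
  | zero => simp
  | succ k ih =>
    rw [Nat.mul_succ, Finset.sum_range_add, ih, Finset.sum_range_succ]

lemma bin1 (φ x : ℝ) (b : ℕ) :
    ∑ d ∈ Finset.range (b + 1), (Nat.choose b d : ℝ) * φ ^ d * x ^ (b - d) = (φ + x) ^ b := by
  rw [add_pow]
  exact Finset.sum_congr rfl fun d _ => by ring

lemma bin2 (φ x : ℝ) (b : ℕ) :
    ∑ d ∈ Finset.range (b + 1), (Nat.choose b d : ℝ) * φ ^ d * d * x ^ (b - d)
      = b * φ * (φ + x) ^ (b - 1) := by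
  cases b with
  | zero => simp
  | succ s =>
    rw [Finset.sum_range_succ']
    simp only [Nat.cast_zero, mul_zero, zero_mul, pow_zero, add_zero, Nat.succ_sub_one]
    have : ∀ e ∈ Finset.range (s + 1),
        (Nat.choose (s + 1) (e + 1) : ℝ) * φ ^ (e + 1) * (e + 1 : ℕ) * x ^ (s + 1 - (e + 1))
        = ((s : ℝ) + 1) * φ * ((Nat.choose s e : ℝ) * φ ^ e * x ^ (s - e)) := by
      intro e _
      have hc : (s + 1) * Nat.choose s e = Nat.choose (s + 1) (e + 1) * (e + 1) :=
        Nat.add_one_mul_choose_eq s e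
      have hc' : ((s : ℝ) + 1) * (Nat.choose s e : ℝ)
          = (Nat.choose (s + 1) (e + 1) : ℝ) * ((e : ℝ) + 1) := by
        exact_mod_cast congrArg (Nat.cast : ℕ → ℝ) hc
      have he : s + 1 - (e + 1) = s - e := by omega
      rw [he]
      push_cast
      linear_combination (-(φ ^ (e + 1) * x ^ (s - e))) * hc'
    rw [Finset.sum_congr rfl this, ← Finset.mul_sum, bin1]
    push_cast
    ring

lemma sum_ext {q b : ℕ} (hb : b < q) (g : ℕ → ℝ) :
    ∑ d ∈ Finset.range q, (Nat.choose b d : ℝ) * g d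
      = ∑ d ∈ Finset.range (b + 1), (Nat.choose b d : ℝ) * g d := by
  refine (Finset.sum_subset (Finset.range_subset_range.2 hb) ?_).symm
  intro d hd hds
  simp only [Finset.mem_range, not_lt] at hd hds
  rw [Nat.choose_eq_zero_of_lt (by omega)]
  simp


lemma sub_digits {q a b c d n : ℕ} (hb : b < q) (hab : q * a + b = n)
    (hc : c ≤ a) (hd : d ≤ b) : n - (q * c + d) = q * (a - c) + (b - d) := by
  have h1 : q * (a - c) + q * c = q * a := by rw [← Nat.mul_add]; congr 1; omega
  have h2 : q * c ≤ q * a := Nat.mul_le_mul_left q hc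
  omega

lemma expand {q a b n : ℕ} (hq : 2 ≤ q) (hb : b < q) (hab : q * a + b = n) (g : ℕ → ℝ) :
    ∑ m ∈ Finset.range (n + 1), (Cq q n m : ℝ) * g m
      = ∑ c ∈ Finset.range (a + 1), ∑ d ∈ Finset.range (b + 1),
          (Nat.choose b d : ℝ) * ((Cq q a c : ℝ) * g (q * c + d)) := by
  have h1 : n + 1 ≤ q * (a + 1) := by rw [Nat.mul_succ]; omega
  rw [Finset.sum_subset (Finset.range_subset_range.2 h1) (by
    intro m hm hms
    simp only [Finset.mem_range, not_lt] at hm hms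
    have : Cq q n m = 0 := by
      by_contra hz
      have := Cq_ne_zero_le hq m n hz
      omega
    rw [this]; simp)]
  rw [sum_range_mul]
  refine Finset.sum_congr rfl fun c hc => ?_
  have step : ∀ d ∈ Finset.range q,
      (Cq q n (q * c + d) : ℝ) * g (q * c + d)
        = (Nat.choose b d : ℝ) * ((Cq q a c : ℝ) * g (q * c + d)) := by
    intro d hd
    simp only [Finset.mem_range] at hd
    rw [← hab, Cq_rec hq hb hd]
    push_cast
    ring
  rw [Finset.sum_congr rfl step, sum_ext hb]

lemma main_id {q : ℕ} (hq : 2 ≤ q) : ∀ n, ∀ φ x : ℝ,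
    (∑ m ∈ Finset.range (n + 1),
        (Cq q n m : ℝ) * φ ^ digitSum q m * x ^ digitSum q (n - m) = (φ + x) ^ digitSum q n)
    ∧ (∑ m ∈ Finset.range (n + 1),
        (Cq q n m : ℝ) * φ ^ digitSum q m * (m : ℝ) * x ^ digitSum q (n - m)
        = (n : ℝ) * φ * (φ + x) ^ (digitSum q n - 1)) := by
  intro n
  induction n using Nat.strong_induction_on with
  | _ n ih =>
    intro φ x
    rcases Nat.eq_zero_or_pos n with rfl | hn
    · constructor <;> simp [Cq_zero hq, digitSum_zero hq]
    set a := n / q with ha'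
    set b := n % q with hb'
    have hab : q * a + b = n := Nat.div_add_mod n q
    have hb : b < q := Nat.mod_lt _ (by omega)
    have ha : a < n := Nat.div_lt_self hn (by omega)
    have IH1 := (ih a ha φ x).1
    have IH2 := (ih a ha φ x).2
    have hSn : digitSum q n = b + digitSum q a := by rw [← hab]; exact digitSum_rec hq hb
    constructor
    · rw [show (fun m => (Cq q n m : ℝ) * φ ^ digitSum q m * x ^ digitSum q (n - m))
          = (fun m => (Cq q n m : ℝ) * (φ ^ digitSum q m * x ^ digitSum q (n - m))) from
          funext fun m => by ring]
      rw [expand hq hb hab]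
      have step : ∀ c ∈ Finset.range (a + 1), ∀ d ∈ Finset.range (b + 1),
          (Nat.choose b d : ℝ) * ((Cq q a c : ℝ) *
            (φ ^ digitSum q (q * c + d) * x ^ digitSum q (n - (q * c + d))))
          = ((Nat.choose b d : ℝ) * φ ^ d * x ^ (b - d)) *
            ((Cq q a c : ℝ) * φ ^ digitSum q c * x ^ digitSum q (a - c)) := by
        intro c hc d hd
        simp only [Finset.mem_range] at hc hd
        rw [digitSum_rec hq (by omega), sub_digits hb hab (by omega) (by omega),
          digitSum_rec hq (by omega), pow_add, pow_add]
        ring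
      rw [Finset.sum_congr rfl fun c hc => Finset.sum_congr rfl fun d hd => step c hc d hd]
      have fact : ∀ c ∈ Finset.range (a + 1),
          ∑ d ∈ Finset.range (b + 1), ((Nat.choose b d : ℝ) * φ ^ d * x ^ (b - d)) *
            ((Cq q a c : ℝ) * φ ^ digitSum q c * x ^ digitSum q (a - c))
          = (φ + x) ^ b * ((Cq q a c : ℝ) * φ ^ digitSum q c * x ^ digitSum q (a - c)) := by
        intro c _
        rw [← Finset.sum_mul, bin1]
      rw [Finset.sum_congr rfl fact, ← Finset.mul_sum, IH1, ← pow_add, hSn, Nat.add_comm]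
    · rw [show (fun m => (Cq q n m : ℝ) * φ ^ digitSum q m * (m : ℝ) * x ^ digitSum q (n - m))
          = (fun m => (Cq q n m : ℝ) *
              (φ ^ digitSum q m * (m : ℝ) * x ^ digitSum q (n - m))) from
          funext fun m => by ring]
      rw [expand hq hb hab]
      have step : ∀ c ∈ Finset.range (a + 1), ∀ d ∈ Finset.range (b + 1),
          (Nat.choose b d : ℝ) * ((Cq q a c : ℝ) *
            (φ ^ digitSum q (q * c + d) * ((q * c + d : ℕ) : ℝ) *
              x ^ digitSum q (n - (q * c + d))))
          = ((Nat.choose b d : ℝ) * φ ^ d * x ^ (b - d)) *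
              ((q : ℝ) * ((Cq q a c : ℝ) * φ ^ digitSum q c * (c : ℝ) * x ^ digitSum q (a - c)))
            + ((Nat.choose b d : ℝ) * φ ^ d * (d : ℝ) * x ^ (b - d)) *
              ((Cq q a c : ℝ) * φ ^ digitSum q c * x ^ digitSum q (a - c)) := by
        intro c hc d hd
        simp only [Finset.mem_range] at hc hd
        rw [digitSum_rec hq (by omega), sub_digits hb hab (by omega) (by omega),
          digitSum_rec hq (by omega), pow_add, pow_add]
        push_cast
        ring
      rw [Finset.sum_congr rfl fun c hc => Finset.sum_congr rfl fun d hd => step c hc d hd]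
      rw [Finset.sum_congr rfl fun c _ => Finset.sum_add_distrib, Finset.sum_add_distrib]
      have f1 : ∀ c ∈ Finset.range (a + 1),
          ∑ d ∈ Finset.range (b + 1), ((Nat.choose b d : ℝ) * φ ^ d * x ^ (b - d)) *
            ((q : ℝ) * ((Cq q a c : ℝ) * φ ^ digitSum q c * (c : ℝ) * x ^ digitSum q (a - c)))
          = (φ + x) ^ b *
            ((q : ℝ) * ((Cq q a c : ℝ) * φ ^ digitSum q c * (c : ℝ) * x ^ digitSum q (a - c))) := by
        intro c _
        rw [← Finset.sum_mul, bin1]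
      have f2 : ∀ c ∈ Finset.range (a + 1),
          ∑ d ∈ Finset.range (b + 1), ((Nat.choose b d : ℝ) * φ ^ d * (d : ℝ) * x ^ (b - d)) *
            ((Cq q a c : ℝ) * φ ^ digitSum q c * x ^ digitSum q (a - c))
          = ((b : ℝ) * φ * (φ + x) ^ (b - 1)) *
            ((Cq q a c : ℝ) * φ ^ digitSum q c * x ^ digitSum q (a - c)) := by
        intro c _
        rw [← Finset.sum_mul, bin2]
      rw [Finset.sum_congr rfl f1, Finset.sum_congr rfl f2, ← Finset.mul_sum, ← Finset.mul_sum,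
        ← Finset.mul_sum, IH2, IH1]
      rcases Nat.eq_zero_or_pos a with h0 | hA
      · have hbn : b = n := by
          rw [h0, Nat.mul_zero] at hab
          omega
        have hSn' : digitSum q n = b := by rw [hSn, h0, digitSum_zero hq, Nat.add_zero]
        rw [h0, hSn', digitSum_zero hq, hbn]
        simp
      · have hSa : 1 ≤ digitSum q a := digitSum_pos hq a hA
        rcases Nat.eq_zero_or_pos b with hb0 | hb1
        · have hcast : (n : ℝ) = (q : ℝ) * (a : ℝ) := by
            rw [← hab, hb0]
            push_cast
            ring
          have hSn' : digitSum q n = digitSum q a := by omega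
          rw [hb0, hSn', hcast]
          simp
          ring
        · have e1 : (φ + x) ^ b * (φ + x) ^ (digitSum q a - 1)
              = (φ + x) ^ (digitSum q n - 1) := by
            rw [← pow_add]
            congr 1
            omega
          have e2 : (φ + x) ^ (b - 1) * (φ + x) ^ digitSum q a
              = (φ + x) ^ (digitSum q n - 1) := by
            rw [← pow_add]
            congr 1
            omega
          have hcast : (n : ℝ) = (q : ℝ) * (a : ℝ) + (b : ℝ) := by
            rw [← hab]
            push_cast
            ring
          rw [hcast]
          linear_combination ((q : ℝ) * (a : ℝ) * φ) * e1 + ((b : ℝ) * φ) * e2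


/-- Fractal Abel identity:
`φ·(φ+n)^{{n}−1} = Σ_{m=0}^n C_q(n,m)·φ^{{m}}·m·n^{{n−m}−1}`, where the last power is an
integer power (zpow) of the positive real `n`. -/
theorem stmt18 (q : ℕ) (hq : 2 ≤ q) (n : ℕ) (hn : 1 ≤ n) (φ : ℝ) :
    φ * (φ + n) ^ (digitSum q n - 1) =
      ∑ m ∈ Finset.range (n + 1),
        (Cq q n m : ℝ) * φ ^ digitSum q m * m *
          (n : ℝ) ^ ((digitSum q (n - m) : ℤ) - 1) := by
  have hn0 : ((n : ℝ)) ≠ 0 := Nat.cast_ne_zero.mpr (by omega)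
  have key := (main_id hq n φ (n : ℝ)).2
  have hterm : ∀ m ∈ Finset.range (n + 1),
      (Cq q n m : ℝ) * φ ^ digitSum q m * m * (n : ℝ) ^ ((digitSum q (n - m) : ℤ) - 1)
      = ((Cq q n m : ℝ) * φ ^ digitSum q m * (m : ℝ) * (n : ℝ) ^ digitSum q (n - m)) * (n : ℝ)⁻¹ := by
    intro m _
    rw [zpow_sub_one₀ hn0, zpow_natCast]
    ring
  rw [Finset.sum_congr rfl hterm, ← Finset.sum_mul, key]
  field_simp
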